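/- For every r ∈ (0,1), ∫_{(0,1)²} 1_{{|y(x) − 1| < r and ∂₁y(x) > 0}} · |∂₁y(x)| dx = (2/π)·[cos(arcsin(1−r)) + (1−r)·arcsin(1−r)] + r − 1. -/

import Mathlib

open Real MeasureTheory Filter Set

set_option maxHeartbeats 1000000

/-- `y(x₁,x₂) = sin(π x₁) sin(π x₂)`. -/
noncomputable def ybar (x : ℝ × ℝ) : ℝ := Real.sin (π * x.1) * Real.sin (π * x.2)

/-- `∂₁ y (x₁,x₂) = π cos(π x₁) sin(π x₂)`. -/
noncomputable def d1y (x : ℝ × ℝ) : ℝ := π * Real.cos (π * x.1) * Real.sin (π * x.2)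

lemma sin_gt_iff_aux {k θ : ℝ} (hk0 : 0 < k) (hk1 : k < 1) (hθ : θ ∈ Set.Ioo 0 π) :
    k < Real.sin θ ↔ Real.arcsin k < θ ∧ θ < π - Real.arcsin k := by
  have hk : k ∈ Set.Icc (-1 : ℝ) 1 := ⟨by linarith, le_of_lt hk1⟩
  have hA2 : Real.arcsin k ≤ π / 2 := Real.arcsin_le_pi_div_two k
  have hπ := Real.pi_pos
  constructor
  · intro h
    constructor
    · by_contra hle
      push_neg at hle
      have hmem : θ ∈ Set.Icc (-(π/2)) (π/2) := ⟨by linarith [hθ.1], hle.trans hA2⟩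
      exact absurd ((Real.arcsin_lt_iff_lt_sin hk hmem).mpr h) (not_lt.mpr hle)
    · by_contra hle
      push_neg at hle
      have h2 : π - θ ≤ Real.arcsin k := by linarith
      have hmem : π - θ ∈ Set.Icc (-(π/2)) (π/2) := ⟨by linarith [hθ.2], h2.trans hA2⟩
      have h' : k < Real.sin (π - θ) := by rwa [Real.sin_pi_sub]
      exact absurd ((Real.arcsin_lt_iff_lt_sin hk hmem).mpr h') (not_lt.mpr h2)
  · rintro ⟨h1, h2⟩
    rcases le_or_gt θ (π/2) with hle | hlt
    · exact (Real.arcsin_lt_iff_lt_sin hk ⟨by linarith [hθ.1], hle⟩).mp h1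
    · have h1' : Real.arcsin k < π - θ := by linarith
      have := (Real.arcsin_lt_iff_lt_sin hk ⟨by linarith [hθ.2], by linarith⟩).mp h1'
      rwa [Real.sin_pi_sub] at this

lemma inner_int (r s : ℝ) (hr : r ∈ Set.Ioo (0:ℝ) 1) (hs0 : 0 < s) (hs1 : s ≤ 1) :
    (∫ x in Set.Ioo (0:ℝ) 1,
        (if |Real.sin (π * x) * s - 1| < r ∧ 0 < π * Real.cos (π * x) * s
          then |π * Real.cos (π * x) * s| else 0))
      = max (s - (1 - r)) 0 := by
  have hπ := Real.pi_pos
  by_cases hcase : 1 - r < s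
  · have hk0 : (0:ℝ) < 1 - r := by linarith [hr.2]
    set c : ℝ := (1 - r) / s with hc
    have hc0 : 0 < c := div_pos hk0 hs0
    have hc1 : c < 1 := (div_lt_one hs0).mpr hcase
    have hcIcc : c ∈ Set.Icc (-1:ℝ) 1 := ⟨by linarith, le_of_lt hc1⟩
    set t : ℝ := Real.arcsin c / π with htdef
    have hA0 : 0 < Real.arcsin c := Real.arcsin_pos.mpr hc0
    have hA2 : Real.arcsin c < π / 2 := Real.arcsin_lt_pi_div_two.mpr hc1
    have ht0 : 0 < t := div_pos hA0 hπ
    have ht2 : t < 1/2 := by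
      rw [htdef, div_lt_iff₀ hπ]; linarith
    have hπt : π * t = Real.arcsin c := by
      rw [htdef]; field_simp
    have key : ∀ x ∈ Set.Ioo (0:ℝ) 1,
        (if |Real.sin (π * x) * s - 1| < r ∧ 0 < π * Real.cos (π * x) * s
          then |π * Real.cos (π * x) * s| else 0)
        = Set.indicator (Set.Ioo t (1/2)) (fun x => π * s * Real.cos (π * x)) x := by
      intro x hx
      have hsinnn : 0 ≤ Real.sin (π * x) :=
        Real.sin_nonneg_of_nonneg_of_le_pi (by nlinarith [hx.1]) (by nlinarith [hx.2])
      have hcond : (|Real.sin (π * x) * s - 1| < r ∧ 0 < π * Real.cos (π * x) * s)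
          ↔ x ∈ Set.Ioo t (1/2) := by
        constructor
        · rintro ⟨h1, h2⟩
          have hcos : 0 < Real.cos (π * x) := by
            by_contra hle
            push_neg at hle
            nlinarith [mul_nonneg (mul_pos hπ hs0).le (neg_nonneg.mpr hle), h2]
          have hx2 : x < 1/2 := by
            by_contra hge
            push_neg at hge
            have : Real.cos (π * x) ≤ 0 :=
              Real.cos_nonpos_of_pi_div_two_le_of_le (by nlinarith) (by nlinarith [hx.2])
            nlinarith
          have h1' : 1 - r < Real.sin (π * x) * s := by
            rcases abs_lt.mp h1 with ⟨ha, _⟩; linarith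
          have hcs : c < Real.sin (π * x) := by
            rw [hc, div_lt_iff₀ hs0]; linarith
          have : Real.arcsin c < π * x :=
            (Real.arcsin_lt_iff_lt_sin hcIcc
              ⟨by nlinarith [hx.1], by nlinarith⟩).mpr hcs
          refine ⟨?_, hx2⟩
          rw [htdef, div_lt_iff₀ hπ]; nlinarith
        · rintro ⟨hx1, hx2⟩
          have hcos : 0 < Real.cos (π * x) :=
            Real.cos_pos_of_mem_Ioo ⟨by nlinarith [hx.1], by nlinarith⟩
          have hAx : Real.arcsin c < π * x := by rw [← hπt]; nlinarith
          have hcs : c < Real.sin (π * x) :=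
            (Real.arcsin_lt_iff_lt_sin hcIcc
              ⟨by nlinarith [hx.1], by nlinarith⟩).mp hAx
          have h1' : 1 - r < Real.sin (π * x) * s := by
            have := (div_lt_iff₀ hs0).mp (hc ▸ hcs : (1 - r)/s < Real.sin (π * x))
            linarith
          have hle1 : Real.sin (π * x) * s ≤ 1 := by
            nlinarith [Real.sin_le_one (π * x)]
          exact ⟨abs_lt.mpr ⟨by linarith, by linarith [hr.1]⟩,
            mul_pos (mul_pos hπ hcos) hs0⟩
      by_cases h : x ∈ Set.Ioo t (1/2)
      · rw [if_pos (hcond.mpr h), Set.indicator_of_mem h]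
        have hcos : 0 < Real.cos (π * x) :=
          Real.cos_pos_of_mem_Ioo ⟨by nlinarith [hx.1], by nlinarith [h.2]⟩
        rw [abs_of_pos (mul_pos (mul_pos hπ hcos) hs0)]; ring
      · rw [if_neg (fun hh => h (hcond.mp hh)), Set.indicator_of_notMem h]
    rw [setIntegral_congr_fun measurableSet_Ioo key,
      setIntegral_indicator measurableSet_Ioo,
      Set.inter_eq_self_of_subset_right (Set.Ioo_subset_Ioo (le_of_lt ht0) (by norm_num)),
      ← integral_Ioc_eq_integral_Ioo,
      ← intervalIntegral.integral_of_le (le_of_lt ht2)]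
    have hcomp : (∫ x in t..(1/2:ℝ), Real.cos (π * x))
        = π⁻¹ • ∫ x in (π*t)..(π*(1/2:ℝ)), Real.cos x := by
      exact intervalIntegral.integral_comp_mul_left Real.cos (ne_of_gt hπ)
    rw [intervalIntegral.integral_const_mul, hcomp, integral_cos]
    have h1 : Real.sin (π * (1/2:ℝ)) = 1 := by
      rw [show π * (1/2:ℝ) = π/2 by ring, Real.sin_pi_div_two]
    have h2 : Real.sin (π * t) = c := by
      rw [hπt, Real.sin_arcsin hcIcc.1 hcIcc.2]
    rw [h1, h2, smul_eq_mul, max_eq_left (by linarith)]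
    have hcs : c * s = 1 - r := div_mul_cancel₀ _ (ne_of_gt hs0)
    have hπne : π ≠ 0 := ne_of_gt hπ
    field_simp
    nlinarith [hcs]
  · push_neg at hcase
    have key : ∀ x ∈ Set.Ioo (0:ℝ) 1,
        (if |Real.sin (π * x) * s - 1| < r ∧ 0 < π * Real.cos (π * x) * s
          then |π * Real.cos (π * x) * s| else 0) = (0:ℝ) := by
      intro x hx
      rw [if_neg]
      rintro ⟨h1, _⟩
      have hle : Real.sin (π * x) * s ≤ s := by
        nlinarith [Real.sin_le_one (π * x)]
      rcases abs_lt.mp h1 with ⟨ha, _⟩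
      linarith
    rw [setIntegral_congr_fun measurableSet_Ioo key, integral_zero,
      max_eq_right (by linarith)]

lemma outer_int (r : ℝ) (hr : r ∈ Set.Ioo (0:ℝ) 1) :
    (∫ x in Set.Ioo (0:ℝ) 1, max (Real.sin (π * x) - (1 - r)) 0)
      = (2 / π) * (Real.cos (Real.arcsin (1 - r)) + (1 - r) * Real.arcsin (1 - r))
        + r - 1 := by
  have hπ := Real.pi_pos
  have hk0 : (0:ℝ) < 1 - r := by linarith [hr.2]
  have hk1 : (1:ℝ) - r < 1 := by linarith [hr.1]
  have hA0 : 0 < Real.arcsin (1 - r) := Real.arcsin_pos.mpr hk0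
  have hA2 : Real.arcsin (1 - r) < π / 2 := Real.arcsin_lt_pi_div_two.mpr hk1
  set a : ℝ := Real.arcsin (1 - r) / π with hadef
  have ha0 : 0 < a := div_pos hA0 hπ
  have ha2 : a < 1/2 := by rw [hadef, div_lt_iff₀ hπ]; linarith
  have hπa : π * a = Real.arcsin (1 - r) := by rw [hadef]; field_simp
  have key : ∀ x ∈ Set.Ioo (0:ℝ) 1,
      max (Real.sin (π * x) - (1 - r)) 0
        = Set.indicator (Set.Ioo a (1 - a)) (fun x => Real.sin (π * x) - (1 - r)) x := by
    intro x hx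
    have hθ : π * x ∈ Set.Ioo 0 π := ⟨by nlinarith [hx.1], by nlinarith [hx.2]⟩
    have hiff := sin_gt_iff_aux hk0 hk1 hθ
    by_cases h : x ∈ Set.Ioo a (1 - a)
    · rw [Set.indicator_of_mem h]
      have : 1 - r < Real.sin (π * x) := by
        apply hiff.mpr
        constructor
        · nlinarith [h.1, hπa]
        · nlinarith [h.2, hπa]
      exact max_eq_left (by linarith)
    · rw [Set.indicator_of_notMem h]
      apply max_eq_right
      by_contra hgt
      push_neg at hgt
      have hs := hiff.mp (by linarith)
      exact h ⟨by nlinarith [hs.1, hπa], by nlinarith [hs.2, hπa]⟩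
  have hale : a ≤ 1 - a := by linarith
  rw [setIntegral_congr_fun measurableSet_Ioo key,
    setIntegral_indicator measurableSet_Ioo,
    Set.inter_eq_self_of_subset_right
      (Set.Ioo_subset_Ioo (le_of_lt ha0) (by linarith)),
    ← integral_Ioc_eq_integral_Ioo,
    ← intervalIntegral.integral_of_le hale]
  have hint1 : IntervalIntegrable (fun x => Real.sin (π * x)) volume a (1 - a) :=
    (Continuous.intervalIntegrable (by fun_prop)) a (1 - a)
  have hint2 : IntervalIntegrable (fun _ : ℝ => (1 - r)) volume a (1 - a) :=
    intervalIntegrable_const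
  rw [intervalIntegral.integral_sub hint1 hint2]
  have hcomp : (∫ x in a..(1-a:ℝ), Real.sin (π * x))
      = π⁻¹ • ∫ x in (π*a)..(π*(1-a:ℝ)), Real.sin x :=
    intervalIntegral.integral_comp_mul_left Real.sin (ne_of_gt hπ)
  rw [hcomp, integral_sin, intervalIntegral.integral_const]
  have h2 : Real.cos (π * (1 - a)) = -Real.cos (Real.arcsin (1 - r)) := by
    rw [show π * (1 - a) = π - π * a by ring, Real.cos_pi_sub, hπa]
  rw [hπa, h2, smul_eq_mul]
  simp only [smul_eq_mul]
  have hπne : π ≠ 0 := ne_of_gt hπ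
  field_simp
  nlinarith [hπa]

/-- For every `r ∈ (0,1)`,
`∫_{(0,1)²} 1_{|y−1|<r, ∂₁y>0} |∂₁y| dx
  = (2/π)(cos(arcsin(1−r)) + (1−r) arcsin(1−r)) + r − 1`. -/
theorem stmt7 (r : ℝ) (hr : r ∈ Set.Ioo (0:ℝ) 1) :
    (∫ x in Set.Ioo (0:ℝ) 1 ×ˢ Set.Ioo (0:ℝ) 1,
        (if |ybar x - 1| < r ∧ 0 < d1y x then |d1y x| else 0))
      = (2 / π) * (Real.cos (Real.arcsin (1 - r)) + (1 - r) * Real.arcsin (1 - r))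
        + r - 1 := by
  have hπ := Real.pi_pos
  set f : ℝ × ℝ → ℝ := fun x => if |ybar x - 1| < r ∧ 0 < d1y x then |d1y x| else 0 with hf
  have hy : Continuous ybar := by unfold ybar; fun_prop
  have hd : Continuous d1y := by unfold d1y; fun_prop
  have hset : MeasurableSet {x : ℝ × ℝ | |ybar x - 1| < r ∧ 0 < d1y x} := by
    have : {x : ℝ × ℝ | |ybar x - 1| < r ∧ 0 < d1y x}
        = {x : ℝ × ℝ | |ybar x - 1| < r} ∩ {x : ℝ × ℝ | 0 < d1y x} := rfl
    rw [this]
    exact ((isOpen_lt (by fun_prop) continuous_const).inter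
      (isOpen_lt continuous_const hd)).measurableSet
  have hmeas : Measurable f := Measurable.ite hset (hd.abs.measurable) measurable_const
  have hbound : ∀ x : ℝ × ℝ, ‖f x‖ ≤ π := by
    intro x
    rw [hf]
    by_cases h : |ybar x - 1| < r ∧ 0 < d1y x
    · simp only [if_pos h, Real.norm_eq_abs, abs_abs]
      unfold d1y
      rw [abs_mul, abs_mul, abs_of_pos hπ, mul_assoc]
      have hq0 : 0 ≤ |Real.cos (π * x.1)| * |Real.sin (π * x.2)| :=
        mul_nonneg (abs_nonneg _) (abs_nonneg _)
      have hq1 : |Real.cos (π * x.1)| * |Real.sin (π * x.2)| ≤ 1 := by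
        nlinarith [abs_cos_le_one (π * x.1), abs_sin_le_one (π * x.2),
          abs_nonneg (Real.cos (π * x.1)), abs_nonneg (Real.sin (π * x.2))]
      nlinarith [hπ]
    · simp [if_neg h, le_of_lt hπ]
  have hint : Integrable f
      ((volume.restrict (Set.Ioo (0:ℝ) 1)).prod (volume.restrict (Set.Ioo (0:ℝ) 1))) := by
    rw [Measure.prod_restrict]
    apply Measure.integrableOn_of_bounded (M := π)
    · rw [Measure.prod_prod, Real.volume_Ioo]
      simp
    · exact hmeas.aestronglyMeasurable
    · exact ae_of_all _ hbound
  have h1 : (∫ x in Set.Ioo (0:ℝ) 1 ×ˢ Set.Ioo (0:ℝ) 1, f x)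
      = ∫ y in Set.Ioo (0:ℝ) 1, ∫ x in Set.Ioo (0:ℝ) 1, f (x, y) := by
    rw [Measure.volume_eq_prod, ← Measure.prod_restrict]
    exact integral_prod_symm f hint
  rw [h1]
  have h2 : ∀ y ∈ Set.Ioo (0:ℝ) 1,
      (∫ x in Set.Ioo (0:ℝ) 1, f (x, y))
        = max (Real.sin (π * y) - (1 - r)) 0 := by
    intro y hy'
    have hs0 : 0 < Real.sin (π * y) :=
      Real.sin_pos_of_pos_of_lt_pi (by nlinarith [hy'.1]) (by nlinarith [hy'.2])
    have hs1 : Real.sin (π * y) ≤ 1 := Real.sin_le_one _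
    have := inner_int r (Real.sin (π * y)) hr hs0 hs1
    rw [← this]
    apply setIntegral_congr_fun measurableSet_Ioo
    intro x _
    simp only [hf, ybar, d1y]
    congr
  rw [setIntegral_congr_fun measurableSet_Ioo h2]
  exact outer_int r hr
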